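/- Let a > 0 be an irrational real number, and for an integer k ≥ 2 set N_a(k) := min( π²·⌈a·k/(a+1)⌉²/a² , π²·⌈k/(a+1)⌉² ) and c_a(k) := (N_a(k) − π²·k²/(a+1)²)/k. Let x ∈ [0,1] and let (k_n) be a strictly increasing sequence of integers ≥ 2 such that fract(k_n/(a+1)) → x, where fract(y) := y − ⌊y⌋. Then c_a(k_n) → min( 2π²·(1−x)/(a+1) , 2π²·x/(a·(a+1)) ) as n → ∞. -/

import Mathlib

open Real Filter

lemma stmt4_aux1 (p a k f : ℝ) (ha : a ≠ 0) (ha1 : a + 1 ≠ 0) (hk : k ≠ 0) :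
    (p * (a * k / (a + 1) + f) ^ 2 / a ^ 2 - p * k ^ 2 / (a + 1) ^ 2) / k
      = 2 * p * f / (a * (a + 1)) + p * f ^ 2 * (a ^ 2 * k)⁻¹ := by
  field_simp
  ring

lemma stmt4_aux2 (p a k f : ℝ) (ha1 : a + 1 ≠ 0) (hk : k ≠ 0) :
    (p * (k / (a + 1) + (1 - f)) ^ 2 - p * k ^ 2 / (a + 1) ^ 2) / k
      = 2 * p * (1 - f) / (a + 1) + p * (1 - f) ^ 2 * k⁻¹ := by
  field_simp
  ring

/-- Key convergence step in Theorem 6.6: along any subsequence `k_n` with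
`fract(k_n/(a+1)) → x`, the normalised deviation `c_a(k_n)` converges to
`min(2π²(1−x)/(a+1), 2π²x/(a(a+1)))`. -/
theorem stmt4 (a : ℝ) (ha : 0 < a) (hirr : Irrational a)
    (N c : ℤ → ℝ)
    (hN : ∀ k : ℤ, N k = min (π ^ 2 * ((⌈a * (k : ℝ) / (a + 1)⌉ : ℝ)) ^ 2 / a ^ 2)
        (π ^ 2 * ((⌈(k : ℝ) / (a + 1)⌉ : ℝ)) ^ 2))
    (hc : ∀ k : ℤ, c k = (N k - π ^ 2 * (k : ℝ) ^ 2 / (a + 1) ^ 2) / (k : ℝ))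
    (x : ℝ) (hx : x ∈ Set.Icc (0 : ℝ) 1)
    (ks : ℕ → ℤ) (hmono : StrictMono ks) (hks : ∀ n, 2 ≤ ks n)
    (hfr : Tendsto (fun n : ℕ => Int.fract ((ks n : ℝ) / (a + 1))) atTop (nhds x)) :
    Tendsto (fun n : ℕ => c (ks n)) atTop
      (nhds (min (2 * π ^ 2 * (1 - x) / (a + 1)) (2 * π ^ 2 * x / (a * (a + 1))))) := by
  have ha1 : (a : ℝ) + 1 ≠ 0 := by linarith
  have ha0 : (a : ℝ) ≠ 0 := ne_of_gt ha
  set f : ℕ → ℝ := fun n => Int.fract ((ks n : ℝ) / (a + 1)) with hfdef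
  set B : ℕ → ℝ := fun n =>
    2 * π ^ 2 * f n / (a * (a + 1)) + π ^ 2 * (f n) ^ 2 * (a ^ 2 * (ks n : ℝ))⁻¹ with hBdef
  set A : ℕ → ℝ := fun n =>
    2 * π ^ 2 * (1 - f n) / (a + 1) + π ^ 2 * (1 - f n) ^ 2 * ((ks n : ℝ))⁻¹ with hAdef
  -- ks n → ∞
  have hle : ∀ n : ℕ, ks 0 + (n : ℤ) ≤ ks n := by
    intro n
    induction n with
    | zero => simp
    | succ m ih =>
      have h2 : ks m < ks (m + 1) := hmono (Nat.lt_succ_self m)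
      push_cast
      omega
  have hktop : Tendsto (fun n => ((ks n : ℝ))) atTop atTop := by
    have h1 : Tendsto (fun n : ℕ => ((ks 0 : ℝ)) + (n : ℝ)) atTop atTop :=
      tendsto_atTop_add_const_left _ _ tendsto_natCast_atTop_atTop
    refine tendsto_atTop_mono (fun n => ?_) h1
    exact_mod_cast hle n
  have hinv : Tendsto (fun n => ((ks n : ℝ))⁻¹) atTop (nhds 0) :=
    hktop.inv_tendsto_atTop
  -- pointwise identity
  have key : ∀ n, c (ks n) = min (B n) (A n) := by
    intro n
    have hk0 : (0 : ℝ) < (ks n : ℝ) := by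
      have := hks n; exact_mod_cast lt_of_lt_of_le (by norm_num) this
    have hkne : ((ks n : ℝ)) ≠ 0 := ne_of_gt hk0
    set t : ℝ := (ks n : ℝ) / (a + 1) with htdef
    have hirrt : Irrational t := by
      have h1 : Irrational (a + 1) := by
        simpa using hirr.add_intCast 1
      have h2 : Irrational (a + 1)⁻¹ := h1.inv
      have h3 : Irrational ((ks n : ℝ) * (a + 1)⁻¹) := by
        refine h2.intCast_mul ?_
        have := hks n; omega
      simpa [htdef, div_eq_mul_inv] using h3
    have hfl : ((⌊t⌋ : ℝ)) < t := by
      rcases lt_or_eq_of_le (Int.floor_le t) with h | h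
      · exact h
      · exact absurd h.symm (hirrt.ne_int _)
    have hfr' : f n = t - ⌊t⌋ := rfl
    have hceil1 : ((⌈t⌉ : ℝ)) = t + (1 - f n) := by
      have : ⌈t⌉ = ⌊t⌋ + 1 := by
        rw [Int.ceil_eq_iff]
        constructor
        · push_cast; linarith
        · push_cast; linarith [Int.lt_floor_add_one t]
      rw [this]
      push_cast
      linarith
    have hceil2 : ((⌈a * (ks n : ℝ) / (a + 1)⌉ : ℝ)) = a * (ks n : ℝ) / (a + 1) + f n := by
      have heq : a * (ks n : ℝ) / (a + 1) = (ks n : ℝ) - t := by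
        rw [htdef, eq_sub_iff_add_eq, ← add_div, div_eq_iff ha1]; ring
      have : ⌈a * (ks n : ℝ) / (a + 1)⌉ = ks n - ⌊t⌋ := by
        rw [heq, sub_eq_add_neg, add_comm, Int.ceil_add_intCast, Int.ceil_neg]
        ring
      rw [this, heq]
      push_cast
      linarith
    rw [hc, hN, hceil1, hceil2]
    rw [← min_sub_sub_right, ← min_div_div_right hk0.le]
    congr 1
    · exact stmt4_aux1 (π ^ 2) a _ (f n) ha0 ha1 hkne
    · have ht' : t = (ks n : ℝ) / (a + 1) := rfl
      rw [ht']
      exact stmt4_aux2 (π ^ 2) a _ (f n) ha1 hkne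
  -- limits
  have hB : Tendsto B atTop (nhds (2 * π ^ 2 * x / (a * (a + 1)))) := by
    have h1 : Tendsto (fun n => 2 * π ^ 2 * f n / (a * (a + 1))) atTop
        (nhds (2 * π ^ 2 * x / (a * (a + 1)))) :=
      (hfr.const_mul _).div_const _
    have h2 : Tendsto (fun n => π ^ 2 * (f n) ^ 2 * (a ^ 2 * (ks n : ℝ))⁻¹) atTop
        (nhds 0) := by
      have hinv2 : Tendsto (fun n => (a ^ 2 * (ks n : ℝ))⁻¹) atTop (nhds 0) := by
        have := hinv.const_mul (a ^ 2)⁻¹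
        simp only [mul_zero] at this
        refine this.congr (fun n => ?_)
        rw [mul_inv]
      have := (((hfr.pow 2).const_mul (π ^ 2)).mul hinv2)
      simpa only [mul_zero] using this
    simpa only [add_zero] using h1.add h2
  have hA : Tendsto A atTop (nhds (2 * π ^ 2 * (1 - x) / (a + 1))) := by
    have h1 : Tendsto (fun n => 2 * π ^ 2 * (1 - f n) / (a + 1)) atTop
        (nhds (2 * π ^ 2 * (1 - x) / (a + 1))) :=
      (((tendsto_const_nhds.sub hfr).const_mul _).div_const _)
    have h2 : Tendsto (fun n => π ^ 2 * (1 - f n) ^ 2 * ((ks n : ℝ))⁻¹) atTop (nhds 0) := by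
      have h3 : Tendsto (fun n => π ^ 2 * (1 - f n) ^ 2 * ((ks n : ℝ))⁻¹) atTop
          (nhds (π ^ 2 * (1 - x) ^ 2 * 0)) :=
        ((((tendsto_const_nhds (x := (1 : ℝ))).sub hfr).pow 2).const_mul (π ^ 2)).mul hinv
      simpa only [mul_zero] using h3
    simpa only [add_zero] using h1.add h2
  have hfin := hB.min hA
  rw [min_comm] at hfin
  exact Tendsto.congr (fun n => (key n).symm) hfin
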